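/- For all 0 ≤ r ≤ m, the Gray image φ(LRM(r,m)) is a binary code of length 2^m, cardinality 2^k with k = Σ_{i=0}^{r} C(m,i), and minimum Hamming distance 2^{m−r}; i.e., it has the parameters of the binary Reed–Muller code RM(r,m). -/

import Mathlib

/-- Lee weight on ℤ₄: w_L(0)=0, w_L(1)=w_L(3)=1, w_L(2)=2. -/
def leeW : ZMod 4 → ℕ := fun a => if a = 0 then 0 else if a = 2 then 2 else 1

/-- Lee weight of a vector: sum of coordinate Lee weights. -/
def leeWt {ι : Type*} [Fintype ι] (x : ι → ZMod 4) : ℕ := ∑ i, leeW (x i)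

/-- β component of the Gray map: β(0)=β(1)=0, β(2)=β(3)=1. -/
def grayβ : ZMod 4 → ZMod 2 := fun a => if a = 0 ∨ a = 1 then 0 else 1

/-- γ component of the Gray map: γ(0)=γ(3)=0, γ(1)=γ(2)=1. -/
def grayγ : ZMod 4 → ZMod 2 := fun a => if a = 0 ∨ a = 3 then 0 else 1

/-- The Gray map φ(x) = (β(x), γ(x)), coded with index set ι ⊕ ι for ℤ₂²ⁿ. -/
def gray {ι : Type*} (x : ι → ZMod 4) : ι ⊕ ι → ZMod 2 :=
  Sum.elim (fun i => grayβ (x i)) (fun i => grayγ (x i))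

/-- `LRM r m` is the quaternary code `𝓛𝓡𝓜(r, m+1)` of the paper, of length `2^m`,
with coordinates indexed by `Fin m → ZMod 2`.  `LRM 0 0 = {0, (2)}`, `LRM (r+1) 0 = ℤ₄`,
and for m ≥ 1 it is given by the Plotkin construction
`{(x, x+y) : x ∈ LRM r m, y ∈ LRM (r-1) m}`, where `LRM (-1) m` is read as the zero
code (giving the repetition-style case `r = 0`). -/
def LRM : ℕ → (m : ℕ) → Set ((Fin m → ZMod 2) → ZMod 4)
  | 0, 0 => {0, fun _ => 2}
  | _ + 1, 0 => Set.univ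
  | 0, m + 1 => {z | ∃ x ∈ LRM 0 m, z = fun v => x (Fin.init v)}
  | r + 1, m + 1 => {z | ∃ x ∈ LRM (r + 1) m, ∃ y ∈ LRM r m,
      z = fun v => if v (Fin.last m) = 0 then x (Fin.init v)
                   else x (Fin.init v) + y (Fin.init v)}

-- auxiliary lemmas
lemma grayβγ_inj : ∀ a b : ZMod 4, grayβ a = grayβ b → grayγ a = grayγ b → a = b := by decide

lemma gray_injective {ι : Type*} : Function.Injective (gray (ι := ι)) := by
  intro x y h
  funext i
  exact grayβγ_inj _ _ (congrFun h (Sum.inl i)) (congrFun h (Sum.inr i))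

lemma leeW_eq_gray (a b : ZMod 4) :
    leeW (a - b) = ((if grayβ a ≠ grayβ b then 1 else 0) + (if grayγ a ≠ grayγ b then 1 else 0) : ℕ) := by revert a b; decide

lemma hammingDist_gray {ι : Type*} [Fintype ι] (x y : ι → ZMod 4) :
    hammingDist (gray x) (gray y) = leeWt (x - y) := by
  classical
  rw [hammingDist, Finset.card_eq_sum_ones, Finset.sum_filter]
  rw [Fintype.sum_sum_type]
  simp only [gray, Sum.elim_inl, Sum.elim_inr]
  rw [← Finset.sum_add_distrib, leeWt]
  refine Finset.sum_congr rfl fun i _ => ?_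
  simp only [Pi.sub_apply]
  rw [leeW_eq_gray]
  congr 1 <;> exact if_congr Iff.rfl rfl rfl

-- ZMod 2 cases
lemma zmod2_cases (a : ZMod 2) : a = 0 ∨ a = 1 := by revert a; decide

-- the splitting equivalence
def splitEquiv (m : ℕ) : (Fin m → ZMod 2) ⊕ (Fin m → ZMod 2) ≃ (Fin (m + 1) → ZMod 2) where
  toFun := Sum.elim (fun u => Fin.snoc u 0) (fun u => Fin.snoc u 1)
  invFun v := if v (Fin.last m) = 0 then .inl (Fin.init v) else .inr (Fin.init v)
  left_inv := by
    rintro (u | u) <;> simp [Fin.snoc_last, Fin.init_snoc]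
  right_inv := by
    intro v
    rcases zmod2_cases (v (Fin.last m)) with h | h
    · have h2 : Fin.snoc (Fin.init v) (0 : ZMod 2) = v := by
        rw [← h]; exact Fin.snoc_init_self v
      simp [h, h2]
    · have h2 : Fin.snoc (Fin.init v) (1 : ZMod 2) = v := by
        rw [← h]; exact Fin.snoc_init_self v
      simp [h, h2]

lemma leeWt_split {m : ℕ} (z : (Fin (m + 1) → ZMod 2) → ZMod 4) :
    leeWt z = leeWt (fun u => z (Fin.snoc u 0)) + leeWt (fun u => z (Fin.snoc u 1)) := by
  rw [leeWt, ← Equiv.sum_comp (splitEquiv m) (fun v => leeW (z v)), Fintype.sum_sum_type]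
  rfl

lemma leeW_tri (a b : ZMod 4) : leeW b ≤ leeW a + leeW (a + b) := by revert a b; decide

lemma leeWt_tri {ι : Type*} [Fintype ι] (x y : ι → ZMod 4) :
    leeWt y ≤ leeWt x + leeWt (x + y) := by
  rw [leeWt, leeWt, leeWt, ← Finset.sum_add_distrib]
  exact Finset.sum_le_sum fun i _ => leeW_tri (x i) (y i)

lemma LRM_zero : ∀ m r, (0 : (Fin m → ZMod 2) → ZMod 4) ∈ LRM r m := by
  intro m
  induction m with
  | zero =>
    intro r
    match r with
    | 0 => exact Or.inl rfl
    | r + 1 => trivial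
  | succ m ih =>
    intro r
    match r with
    | 0 => exact ⟨0, ih 0, rfl⟩
    | r + 1 =>
      refine ⟨0, ih _, 0, ih _, ?_⟩
      funext v
      by_cases h : v (Fin.last m) = 0 <;> simp [h]

lemma LRM_add : ∀ m r (a b : (Fin m → ZMod 2) → ZMod 4),
    a ∈ LRM r m → b ∈ LRM r m → a + b ∈ LRM r m := by
  intro m
  induction m with
  | zero =>
    intro r a b ha hb
    match r with
    | 0 =>
      rcases ha with ha | ha <;> rcases hb with hb | hb <;> subst ha <;> subst hb
      · exact Or.inl (by simp)
      · exact Or.inr (by funext v; simp)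
      · exact Or.inr (by funext v; simp)
      · exact Or.inl (by funext v; simp; decide)
    | r + 1 => trivial
  | succ m ih =>
    intro r a b ha hb
    match r with
    | 0 =>
      obtain ⟨x, hx, rfl⟩ := ha
      obtain ⟨x', hx', rfl⟩ := hb
      exact ⟨x + x', ih 0 x x' hx hx', rfl⟩
    | r + 1 =>
      obtain ⟨x, hx, y, hy, rfl⟩ := ha
      obtain ⟨x', hx', y', hy', rfl⟩ := hb
      refine ⟨x + x', ih _ _ _ hx hx', y + y', ih _ _ _ hy hy', ?_⟩
      funext v
      by_cases h : v (Fin.last m) = 0 <;> simp [h] <;> ring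

lemma LRM_neg : ∀ m r (a : (Fin m → ZMod 2) → ZMod 4),
    a ∈ LRM r m → -a ∈ LRM r m := by
  intro m
  induction m with
  | zero =>
    intro r a ha
    match r with
    | 0 =>
      rcases ha with ha | ha <;> subst ha
      · exact Or.inl (by simp)
      · exact Or.inr (by funext v; simp; decide)
    | r + 1 => trivial
  | succ m ih =>
    intro r a ha
    match r with
    | 0 =>
      obtain ⟨x, hx, rfl⟩ := ha
      exact ⟨-x, ih 0 x hx, rfl⟩
    | r + 1 =>
      obtain ⟨x, hx, y, hy, rfl⟩ := ha
      refine ⟨-x, ih _ _ hx, -y, ih _ _ hy, ?_⟩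
      funext v
      by_cases h : v (Fin.last m) = 0 <;> simp [h] <;> ring

lemma LRM_sub {m r : ℕ} {a b : (Fin m → ZMod 2) → ZMod 4}
    (ha : a ∈ LRM r m) (hb : b ∈ LRM r m) : a - b ∈ LRM r m := by
  rw [sub_eq_add_neg]
  exact LRM_add m r a (-b) ha (LRM_neg m r b hb)

lemma leeW_eq_zero : ∀ a : ZMod 4, leeW a = 0 ↔ a = 0 := by decide

lemma leeWt_eq_zero {ι : Type*} [Fintype ι] (x : ι → ZMod 4) :
    leeWt x = 0 ↔ x = 0 := by
  rw [leeWt, Finset.sum_eq_zero_iff]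
  constructor
  · intro h; funext i; exact (leeW_eq_zero _).1 (h i (Finset.mem_univ i))
  · rintro rfl i _; simp [leeW]

lemma leeWt_lower : ∀ m r (z : (Fin m → ZMod 2) → ZMod 4),
    z ∈ LRM r m → z ≠ 0 → 2 ^ (m + 1 - r) ≤ leeWt z := by
  intro m
  induction m with
  | zero =>
    intro r z hz hz0
    match r with
    | 0 =>
      rcases hz with h | h
      · exact absurd h hz0
      · subst h; revert hz0; decide
    | r + 1 =>
      have : 0 + 1 - (r + 1) = 0 := by omega
      rw [this, pow_zero]
      have := (leeWt_eq_zero z).not.2 hz0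
      omega
  | succ m ih =>
    intro r z hz hz0
    match r with
    | 0 =>
      obtain ⟨x, hx, rfl⟩ := hz
      have hx0 : x ≠ 0 := by
        rintro rfl; exact hz0 (by funext v; simp)
      have e0 : (fun u => (fun v : Fin (m+1) → ZMod 2 => x (Fin.init v)) (Fin.snoc u (0 : ZMod 2))) = x := by
        funext u; simp [Fin.init_snoc]
      have e1 : (fun u => (fun v : Fin (m+1) → ZMod 2 => x (Fin.init v)) (Fin.snoc u (1 : ZMod 2))) = x := by
        funext u; simp [Fin.init_snoc]
      have := leeWt_split (fun v : Fin (m+1) → ZMod 2 => x (Fin.init v))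
      rw [e0, e1] at this
      rw [this]
      have hb := ih 0 x hx hx0
      have : 2 ^ (m + 1 + 1 - 0) = 2 ^ (m + 1 - 0) + 2 ^ (m + 1 - 0) := by
        simp [pow_succ]; ring
      omega
    | r + 1 =>
      obtain ⟨x, hx, y, hy, rfl⟩ := hz
      set z := (fun v : Fin (m+1) → ZMod 2 => if v (Fin.last m) = 0 then x (Fin.init v)
          else x (Fin.init v) + y (Fin.init v)) with hzdef
      have e0 : (fun u => z (Fin.snoc u (0 : ZMod 2))) = x := by
        funext u
        simp only [hzdef, Fin.snoc_last, Fin.init_snoc]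
        rw [if_pos trivial]
      have e1 : (fun u => z (Fin.snoc u (1 : ZMod 2))) = x + y := by
        funext u
        simp only [hzdef, Fin.snoc_last, Fin.init_snoc]
        rw [if_neg (by decide : (1 : ZMod 2) ≠ 0)]
        rfl
      have hsplit := leeWt_split z
      rw [e0, e1] at hsplit
      by_cases hy0 : y = 0
      · subst hy0
        rw [add_zero] at hsplit
        have hx0 : x ≠ 0 := by
          rintro rfl
          apply hz0
          funext v
          simp only [hzdef]
          split <;> simp
        have hb := ih (r + 1) x hx hx0
        have h1 : 2 ^ (m + 1 + 1 - (r + 1)) ≤ 2 ^ (m + 1 - (r + 1)) * 2 := by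
          rw [← pow_succ]
          exact Nat.pow_le_pow_right (by norm_num) (by omega)
        omega
      · have hb := ih r y hy hy0
        have htri := leeWt_tri x y
        have he : m + 1 + 1 - (r + 1) = m + 1 - r := by omega
        rw [he]
        omega

lemma leeWt_exists : ∀ m r, r ≤ m + 1 →
    ∃ z ∈ LRM r m, leeWt z = 2 ^ (m + 1 - r) := by
  intro m
  induction m with
  | zero =>
    intro r hr
    match r with
    | 0 => exact ⟨fun _ => 2, Or.inr rfl, by decide⟩
    | 1 => exact ⟨fun _ => 1, trivial, by decide⟩
  | succ m ih =>
    intro r hr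
    match r with
    | 0 =>
      obtain ⟨x, hx, hwx⟩ := ih 0 (by omega)
      refine ⟨fun v => x (Fin.init v), ⟨x, hx, rfl⟩, ?_⟩
      have e0 : (fun u => (fun v : Fin (m+1) → ZMod 2 => x (Fin.init v)) (Fin.snoc u (0 : ZMod 2))) = x := by
        funext u; simp [Fin.init_snoc]
      have e1 : (fun u => (fun v : Fin (m+1) → ZMod 2 => x (Fin.init v)) (Fin.snoc u (1 : ZMod 2))) = x := by
        funext u; simp [Fin.init_snoc]
      have := leeWt_split (fun v : Fin (m+1) → ZMod 2 => x (Fin.init v))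
      rw [e0, e1, hwx] at this
      rw [this]
      simp only [Nat.sub_zero]
      rw [← two_mul, ← pow_succ']
    | r + 1 =>
      obtain ⟨y, hy, hwy⟩ := ih r (by omega)
      set z := (fun v : Fin (m+1) → ZMod 2 => if v (Fin.last m) = 0 then (0 : ((Fin m → ZMod 2) → ZMod 4)) (Fin.init v)
          else (0 : ((Fin m → ZMod 2) → ZMod 4)) (Fin.init v) + y (Fin.init v)) with hzdef
      refine ⟨z, ⟨0, LRM_zero m (r + 1), y, hy, rfl⟩, ?_⟩
      have e0 : (fun u => z (Fin.snoc u (0 : ZMod 2))) = 0 := by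
        funext u
        simp only [hzdef, Fin.snoc_last, Fin.init_snoc]
        rw [if_pos trivial]
        rfl
      have e1 : (fun u => z (Fin.snoc u (1 : ZMod 2))) = y := by
        funext u
        simp only [hzdef, Fin.snoc_last, Fin.init_snoc]
        rw [if_neg (by decide : (1 : ZMod 2) ≠ 0)]
        simp
      have := leeWt_split z
      rw [e0, e1, hwy, (leeWt_eq_zero _).2 rfl, zero_add] at this
      rw [this]
      congr 1
      omega

lemma sum_choose_pascal (m r : ℕ) :
    ∑ i ∈ Finset.range (r + 2), (m + 2).choose i
      = ∑ i ∈ Finset.range (r + 2), (m + 1).choose i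
        + ∑ i ∈ Finset.range (r + 1), (m + 1).choose i := by
  rw [Finset.sum_range_succ' (fun i => (m + 2).choose i) (r + 1),
    Finset.sum_range_succ' (fun i => (m + 1).choose i) (r + 1)]
  simp only [Nat.choose_succ_succ, Finset.sum_add_distrib, Nat.choose_zero_right]
  omega

lemma sum_choose_one : ∀ r, ∑ i ∈ Finset.range (r + 2), Nat.choose 1 i = 2 := by
  intro r
  induction r with
  | zero => decide
  | succ n ih =>
    rw [Finset.sum_range_succ, ih, Nat.choose_eq_zero_of_lt (by omega)]

lemma ncard_LRM : ∀ m r,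
    (LRM r m).ncard = 2 ^ (∑ i ∈ Finset.range (r + 1), (m + 1).choose i) := by
  intro m
  induction m with
  | zero =>
    intro r
    match r with
    | 0 =>
      have hne : (0 : (Fin 0 → ZMod 2) → ZMod 4) ≠ fun _ => 2 := by
        intro h
        have := congrFun h (fun i => i.elim0)
        exact absurd this (by decide)
      rw [show LRM 0 0 = {0, fun _ => 2} from rfl, Set.ncard_pair hne]
      simp
    | r + 1 =>
      rw [show LRM (r + 1) 0 = Set.univ from rfl, Set.ncard_univ,
        Nat.card_eq_fintype_card, Fintype.card_fun, sum_choose_one r]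
      simp
  | succ m ih =>
    intro r
    match r with
    | 0 =>
      have himg : LRM 0 (m + 1)
          = (fun (x : (Fin m → ZMod 2) → ZMod 4) =>
              fun v : Fin (m + 1) → ZMod 2 => x (Fin.init v)) '' LRM 0 m := by
        ext z
        constructor
        · rintro ⟨x, hx, rfl⟩; exact ⟨x, hx, rfl⟩
        · rintro ⟨x, hx, rfl⟩; exact ⟨x, hx, rfl⟩
      have hinj : Function.Injective (fun (x : (Fin m → ZMod 2) → ZMod 4) =>
          fun v : Fin (m + 1) → ZMod 2 => x (Fin.init v)) := by
        intro x x' h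
        funext u
        have := congrFun h (Fin.snoc u 0)
        simpa [Fin.init_snoc] using this
      rw [himg, Set.ncard_image_of_injective _ hinj, ih 0]
      simp
    | r + 1 =>
      set F := (fun p : ((Fin m → ZMod 2) → ZMod 4) × ((Fin m → ZMod 2) → ZMod 4) =>
        fun v : Fin (m + 1) → ZMod 2 =>
          if v (Fin.last m) = 0 then p.1 (Fin.init v)
          else p.1 (Fin.init v) + p.2 (Fin.init v)) with hF
      have himg : LRM (r + 1) (m + 1) = F '' (LRM (r + 1) m ×ˢ LRM r m) := by
        ext z
        constructor
        · rintro ⟨x, hx, y, hy, rfl⟩; exact ⟨(x, y), ⟨hx, hy⟩, rfl⟩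
        · rintro ⟨⟨x, y⟩, ⟨hx, hy⟩, rfl⟩; exact ⟨x, hx, y, hy, rfl⟩
      have hinj : Function.Injective F := by
        rintro ⟨x, y⟩ ⟨x', y'⟩ h
        have hx : x = x' := by
          funext u
          have h0 := congrFun h (Fin.snoc u 0)
          simpa [hF, Fin.snoc_last, Fin.init_snoc] using h0
        have hy : y = y' := by
          funext u
          have h1 := congrFun h (Fin.snoc u 1)
          simp only [hF, Fin.snoc_last, Fin.init_snoc,
            if_neg (show (1 : ZMod 2) ≠ 0 by decide)] at h1
          rw [hx] at h1
          exact add_left_cancel h1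
        rw [Prod.ext_iff]
        exact ⟨hx, hy⟩
      have hprod : (LRM (r + 1) m ×ˢ LRM r m).ncard
          = (LRM (r + 1) m).ncard * (LRM r m).ncard := by
        rw [← Nat.card_coe_set_eq, ← Nat.card_coe_set_eq, ← Nat.card_coe_set_eq,
          Nat.card_congr (Equiv.Set.prod _ _), Nat.card_prod]
      rw [himg, Set.ncard_image_of_injective _ hinj, hprod, ih (r + 1), ih r, ← pow_add,
        sum_choose_pascal m r]

/-- The Gray image of `LRM(r,m)` (paper's `m` is `m+1`) is a binary code of length
`2^m`, cardinality `2^k` with `k = ∑_{i=0}^r C(m,i)`, and minimum Hamming distance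
`2^{m-r}`: it has the parameters of the Reed–Muller code RM(r,m). -/
theorem gray_LRM_params (m r : ℕ) (hr : r ≤ m + 1) :
    (gray '' LRM r m).ncard = 2 ^ (∑ i ∈ Finset.range (r + 1), (m + 1).choose i) ∧
    IsLeast {e | ∃ u ∈ gray '' LRM r m, ∃ v ∈ gray '' LRM r m, u ≠ v ∧
      e = hammingDist u v} (2 ^ (m + 1 - r)) := by
  refine ⟨?_, ?_, ?_⟩
  · rw [Set.ncard_image_of_injective _ gray_injective, ncard_LRM]
  · obtain ⟨c, hc, hwc⟩ := leeWt_exists m r hr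
    have hc0 : c ≠ 0 := by
      intro h
      rw [h, (leeWt_eq_zero _).2 rfl] at hwc
      exact (pow_pos (by norm_num : (0:ℕ) < 2) _).ne' hwc.symm
    refine ⟨gray c, ⟨c, hc, rfl⟩, gray 0, ⟨0, LRM_zero m r, rfl⟩, ?_, ?_⟩
    · intro h; exact hc0 (gray_injective h)
    · rw [hammingDist_gray, sub_zero, hwc]
  · rintro e ⟨u, ⟨a, ha, rfl⟩, v, ⟨b, hb, rfl⟩, hne, rfl⟩
    rw [hammingDist_gray]
    refine leeWt_lower m r (a - b) (LRM_sub ha hb) ?_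
    intro h
    rw [sub_eq_zero] at h
    exact hne (by rw [h])
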